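/- Let s ∈ ℝ^K, let r = softmax(s) (i.e., r_i = exp(s_i)/∑_{ℓ} exp(s_ℓ)), and let m = argmax_i s_i. Suppose s_m − s_k ≥ βδ for all k ≠ m, where β, δ > 0. Then every entry of the softmax Jacobian is small: for all indices i and k, |∂r_i/∂s_k| ≤ K·exp(−βδ), where ∂r_i/∂s_k equals r_i(1 − r_i) if i = k and −r_i·r_k if i ≠ k. -/
import Mathlib


open Real Finset

/-- **Softmax Jacobian entries are exponentially small under a score gap.**
Let `s ∈ ℝ^K`, `r = softmax s` (`r i = exp (s i) / ∑ ℓ, exp (s ℓ)`), and let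
`m` be the argmax of `s`.  If `s m - s k ≥ βδ` for all `k ≠ m` with `β, δ > 0`,
then every entry of the softmax Jacobian — which equals `r i * (1 - r i)` on
the diagonal (`i = k`) and `-(r i * r k)` off it — has absolute value at most
`K * exp (-βδ)`. -/
theorem softmax_jacobian_entry_bound
    (K : ℕ) (s : Fin K → ℝ)
    (r : Fin K → ℝ)
    (hr : ∀ i, r i = Real.exp (s i) / ∑ ℓ, Real.exp (s ℓ))
    (m : Fin K) (hm : ∀ k, s k ≤ s m)
    (β δ : ℝ) (hβ : 0 < β) (hδ : 0 < δ)
    (hgap : ∀ k, k ≠ m → s m - s k ≥ β * δ) :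
    ∀ i k : Fin K,
      |if i = k then r i * (1 - r i) else -(r i * r k)| ≤ K * Real.exp (-(β * δ)) := by
  have hK : (1 : ℝ) ≤ K := by
    have : 0 < K := m.pos
    exact_mod_cast this
  set S := ∑ ℓ, Real.exp (s ℓ) with hSdef
  have hSpos : 0 < S :=
    Finset.sum_pos (fun ℓ _ => Real.exp_pos _) ⟨m, Finset.mem_univ m⟩
  have hrn : ∀ i, 0 ≤ r i := fun i => by
    rw [hr]; positivity
  have hr1 : ∀ i, r i ≤ 1 := fun i => by
    rw [hr, div_le_one hSpos]
    exact Finset.single_le_sum (fun ℓ _ => (Real.exp_pos _).le) (Finset.mem_univ i)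
  set E := Real.exp (-(β * δ)) with hEdef
  have hE0 : 0 < E := Real.exp_pos _
  have hE1 : E ≤ 1 := by
    rw [hEdef, Real.exp_le_one_iff]
    nlinarith
  have hsmall : ∀ k, k ≠ m → r k ≤ E := by
    intro k hk
    rw [hr]
    have h1 : Real.exp (s k) / S ≤ Real.exp (s k) / Real.exp (s m) := by
      apply div_le_div_of_nonneg_left (Real.exp_pos _).le (Real.exp_pos _)
      exact Finset.single_le_sum (fun ℓ _ => (Real.exp_pos _).le) (Finset.mem_univ m)
    have h2 : Real.exp (s k) / Real.exp (s m) = Real.exp (s k - s m) := by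
      rw [Real.exp_sub]
    have h3 : Real.exp (s k - s m) ≤ E := by
      rw [hEdef]
      apply Real.exp_le_exp.mpr
      have := hgap k hk
      linarith
    calc Real.exp (s k) / S ≤ Real.exp (s k) / Real.exp (s m) := h1
      _ = Real.exp (s k - s m) := h2
      _ ≤ E := h3
  have hsum1 : ∑ i, r i = 1 := by
    simp only [hr, ← Finset.sum_div]
    exact div_self hSpos.ne'
  have honem : 1 - r m ≤ (K : ℝ) * E := by
    have hsplit : r m + ∑ k ∈ Finset.univ.erase m, r k = 1 := by
      rw [← hsum1, Finset.add_sum_erase _ _ (Finset.mem_univ m)]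
    have hbd : ∑ k ∈ Finset.univ.erase m, r k ≤ (Finset.univ.erase m).card • E :=
      Finset.sum_le_card_nsmul _ _ E (fun k hk => hsmall k (Finset.ne_of_mem_erase hk))
    have hcard : ((Finset.univ.erase m).card : ℝ) ≤ (K : ℝ) := by
      have := Finset.card_erase_le (a := m) (s := (Finset.univ : Finset (Fin K)))
      have h2 : (Finset.univ : Finset (Fin K)).card = K := by simp
      exact_mod_cast le_trans this (le_of_eq h2)
    rw [nsmul_eq_mul] at hbd
    nlinarith [hbd, hcard]
  intro i k
  by_cases hik : i = k
  · subst hik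
    rw [if_pos rfl]
    rw [abs_of_nonneg (by nlinarith [hrn i, hr1 i])]
    by_cases him : i = m
    · subst him
      nlinarith [hrn i, hr1 i]
    · have := hsmall i him
      nlinarith [hrn i, hr1 i]
  · simp only [if_neg hik, abs_neg]
    rw [abs_of_nonneg (mul_nonneg (hrn i) (hrn k))]
    by_cases him : i = m
    · have hkm : k ≠ m := fun h => hik (him.trans h.symm)
      have := hsmall k hkm
      nlinarith [hrn i, hr1 i, hrn k]
    · have := hsmall i him
      nlinarith [hrn k, hr1 k, hrn i]
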